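/- Let s ≠ 0, P = I - (s s^T)/(s^T s), and J = diag(I_n, -I_m). Then the J-symmetric update B_{k+1} = B_k + (J s r^T J + r s^T)/(s^T s) - ((J s)^T r)(J s s^T)/((s^T s)^2) with r = y - B_k s, for J-symmetric B_k, can be equivalently written as B_{k+1} = J P J B_k P + (y s^T)/(s^T s) + (J s y^T J)/(s^T s) P. -/

import Mathlib

open Matrix

section Helpers
variable {k : Type*} [Fintype k]

lemma mul_vmv (M : Matrix k k ℝ) (a b : k → ℝ) :
    M * vecMulVec a b = vecMulVec (M.mulVec a) b := by
  ext i j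
  simp [mul_apply, vecMulVec_apply, mulVec, dotProduct, Finset.sum_mul, mul_assoc]

lemma vmv_mul (a b : k → ℝ) (M : Matrix k k ℝ) :
    vecMulVec a b * M = vecMulVec a (Mᵀ.mulVec b) := by
  ext i j
  simp [mul_apply, vecMulVec_apply, mulVec, dotProduct, Finset.mul_sum]
  congr 1; ext x; ring

lemma vmv_vmv (a b c d : k → ℝ) :
    vecMulVec a b * vecMulVec c d = (b ⬝ᵥ c) • vecMulVec a d := by
  ext i j
  simp only [mul_apply, vecMulVec_apply, Matrix.smul_apply, dotProduct, Finset.sum_mul, smul_eq_mul]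
  congr 1; ext x; ring

lemma vmv_sub_left (a b c : k → ℝ) :
    vecMulVec (a - b) c = vecMulVec a c - vecMulVec b c := by
  ext i j; simp [vecMulVec_apply, sub_mul]

lemma vmv_sub_right (a b c : k → ℝ) :
    vecMulVec a (b - c) = vecMulVec a b - vecMulVec a c := by
  ext i j; simp [vecMulVec_apply, mul_sub]

lemma mulVec_dot (M : Matrix k k ℝ) (a b : k → ℝ) :
    (M.mulVec a) ⬝ᵥ b = a ⬝ᵥ (Mᵀ.mulVec b) := by
  rw [dotProduct_comm, dotProduct_mulVec, ← mulVec_transpose, dotProduct_comm]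

lemma vmv_mulVec (a b c : k → ℝ) :
    (vecMulVec a b).mulVec c = (b ⬝ᵥ c) • a := by
  ext i
  simp only [mulVec, vecMulVec_apply, dotProduct, Pi.smul_apply, smul_eq_mul, Finset.sum_mul]
  congr 1; ext x; ring

lemma smul_vmv (t : ℝ) (a b : k → ℝ) :
    vecMulVec (t • a) b = t • vecMulVec a b := by
  ext i j; simp [vecMulVec_apply, mul_assoc]

end Helpers

/-- `J = diag(I_n, -I_m)` as a block matrix. -/
noncomputable def Jmat (n m : ℕ) : Matrix (Fin n ⊕ Fin m) (Fin n ⊕ Fin m) ℝ :=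
  Matrix.fromBlocks 1 0 0 (-1)

lemma Jmat_transpose (n m : ℕ) : (Jmat n m)ᵀ = Jmat n m := by
  simp [Jmat, fromBlocks_transpose]

lemma Jmat_mul_self (n m : ℕ) : Jmat n m * Jmat n m = 1 := by
  simp [Jmat, fromBlocks_multiply, ← fromBlocks_one]

/-- The `J`-symmetric quasi-Newton update with `r = y - B_k s`:
`B_{k+1} = B_k + (Js rᵀ J + r sᵀ)/(sᵀs) - ((Js)ᵀ r)(Js sᵀ)/(sᵀs)²`. -/
noncomputable def JsymmUpdate (n m : ℕ)
    (Bk : Matrix (Fin n ⊕ Fin m) (Fin n ⊕ Fin m) ℝ)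
    (s y : (Fin n ⊕ Fin m) → ℝ) : Matrix (Fin n ⊕ Fin m) (Fin n ⊕ Fin m) ℝ :=
  let J := Jmat n m
  let r := y - Bk.mulVec s
  Bk + (s ⬝ᵥ s)⁻¹ • (Matrix.vecMulVec (J.mulVec s) (J.mulVec r)
      + Matrix.vecMulVec r s)
    - (((J.mulVec s) ⬝ᵥ r) / (s ⬝ᵥ s) ^ 2) • Matrix.vecMulVec (J.mulVec s) s

theorem stmt_5 (n m : ℕ) (Bk : Matrix (Fin n ⊕ Fin m) (Fin n ⊕ Fin m) ℝ)
    (s y : (Fin n ⊕ Fin m) → ℝ) (hs : s ≠ 0)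
    (hBk : Jmat n m * Bk = Bkᵀ * Jmat n m) :
    let J := Jmat n m
    let P : Matrix (Fin n ⊕ Fin m) (Fin n ⊕ Fin m) ℝ :=
      1 - (s ⬝ᵥ s)⁻¹ • Matrix.vecMulVec s s
    JsymmUpdate n m Bk s y
      = J * P * J * Bk * P + (s ⬝ᵥ s)⁻¹ • Matrix.vecMulVec y s
        + (s ⬝ᵥ s)⁻¹ • (J * Matrix.vecMulVec s y * J * P) := by
  intro J P
  have hc : (s ⬝ᵥ s) ≠ 0 := by
    simpa [dotProduct_self_eq_zero] using hs
  have hJT : Jᵀ = J := Jmat_transpose n m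
  have hJJ : J * J = 1 := Jmat_mul_self n m
  have hBJ : Bkᵀ * J = J * Bk := hBk.symm
  have hd2 : ((J * Bk).mulVec s) ⬝ᵥ s = (J.mulVec s) ⬝ᵥ (Bk.mulVec s) := by
    rw [← mulVec_mulVec, mulVec_dot, hJT, dotProduct_comm]
  have hd1 : (J.mulVec y) ⬝ᵥ s = (J.mulVec s) ⬝ᵥ y := by
    rw [mulVec_dot, hJT, dotProduct_comm]
  simp only [JsymmUpdate, J, P, mul_sub, sub_mul, mul_add, add_mul, mul_one, one_mul,
    mul_smul_comm, smul_mul_assoc, mul_vmv, vmv_mul, vmv_vmv, vmv_sub_left, vmv_sub_right,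
    mulVec_sub, dotProduct_sub, vmv_mulVec, smul_vmv, dotProduct_smul, mulVec_mulVec, hJJ, hJT, hBJ, hd1, hd2, smul_sub, smul_add]
  match_scalars <;> field_simp <;> ring
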